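/- Law of large numbers in Hadamard spaces (Sturm): let (H,d) be a Hadamard space, a₁,…,a_N ∈ H, w₁,…,w_N positive weights with Σₙ wₙ = 1, and Ξ the unique minimizer of x ↦ Σₙ wₙ·d(x,aₙ)². On a probability space, let (Y_k)_{k∈ℕ} be independent H-valued random variables, each taking the value aₙ with probability wₙ for n = 1,…,N. Define S₁ := Y₁ and S_{k+1} := (1 − 1/(k+1))S_k ⊕ (1/(k+1))Y_{k+1} for k ∈ ℕ. Then S_k → Ξ almost surely as k → ∞. -/

import Mathlib

open Filter Topology

/-- A Hadamard space structure on a metric space `H`: a geodesic combination map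
`geo x y t = (1-t)x ⊕ ty` satisfying the geodesic axioms and the CAT(0) inequality.
(Completeness is imposed via the `CompleteSpace` instance in the theorems.) -/
structure Hadamard (H : Type*) [MetricSpace H] : Type _ where
  geo : H → H → ℝ → H
  geo_zero : ∀ x y : H, geo x y 0 = x
  geo_one : ∀ x y : H, geo x y 1 = y
  geo_dist : ∀ x y : H, ∀ s ∈ Set.Icc (0 : ℝ) 1, ∀ t ∈ Set.Icc (0 : ℝ) 1,
    dist (geo x y s) (geo x y t) = |s - t| * dist x y
  cat0 : ∀ z x y : H, ∀ t ∈ Set.Icc (0 : ℝ) 1,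
    dist z (geo x y t) ^ 2
      ≤ (1 - t) * dist z x ^ 2 + t * dist z y ^ 2 - t * (1 - t) * dist x y ^ 2


open MeasureTheory ProbabilityTheory in
private lemma sturm_var_ineq {H : Type*} [MetricSpace H] (G : Hadamard H)
    {N : ℕ} (a : Fin N → H) (w : Fin N → ℝ)
    (hw : ∀ n, 0 ≤ w n) (hsum : ∑ n, w n = 1) (Ξ : H)
    (hΞ : ∀ x : H, ∑ n, w n * dist Ξ (a n) ^ 2 ≤ ∑ n, w n * dist x (a n) ^ 2) (x : H) :
    (∑ n, w n * dist Ξ (a n) ^ 2) + dist x Ξ ^ 2 ≤ ∑ n, w n * dist x (a n) ^ 2 := by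
  set σ2 := ∑ n, w n * dist Ξ (a n) ^ 2 with hσ2
  set fx := ∑ n, w n * dist x (a n) ^ 2 with hfx
  have key : ∀ t : ℝ, 0 ≤ t → t < 1 → σ2 + t * dist x Ξ ^ 2 ≤ fx := by
    intro t ht0 ht1
    have htIcc : t ∈ Set.Icc (0:ℝ) 1 := ⟨ht0, ht1.le⟩
    have hγ := hΞ (G.geo x Ξ t)
    have hsum' : ∑ n, w n * dist (G.geo x Ξ t) (a n) ^ 2
        ≤ (1 - t) * fx + t * σ2 - t * (1 - t) * dist x Ξ ^ 2 := by
      have h1 : ∀ n : Fin N, w n * dist (G.geo x Ξ t) (a n) ^ 2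
          ≤ (1 - t) * (w n * dist x (a n) ^ 2) + t * (w n * dist Ξ (a n) ^ 2)
            - (t * (1 - t) * dist x Ξ ^ 2) * w n := by
        intro n
        have h := G.cat0 (a n) x Ξ t htIcc
        rw [dist_comm (a n) (G.geo x Ξ t), dist_comm (a n) x, dist_comm (a n) Ξ] at h
        nlinarith [hw n, sq_nonneg (dist x Ξ)]
      calc ∑ n, w n * dist (G.geo x Ξ t) (a n) ^ 2
          ≤ ∑ n, ((1 - t) * (w n * dist x (a n) ^ 2) + t * (w n * dist Ξ (a n) ^ 2)
            - (t * (1 - t) * dist x Ξ ^ 2) * w n) := Finset.sum_le_sum fun n _ => h1 n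
        _ = (1 - t) * fx + t * σ2 - t * (1 - t) * dist x Ξ ^ 2 := by
            rw [Finset.sum_sub_distrib, Finset.sum_add_distrib, ← Finset.mul_sum,
              ← Finset.mul_sum, ← Finset.mul_sum, hsum]
            ring
    have hcomb : σ2 ≤ (1 - t) * fx + t * σ2 - t * (1 - t) * dist x Ξ ^ 2 :=
      le_trans hγ hsum'
    nlinarith [sub_pos.mpr ht1]
  have hlim : Tendsto (fun j : ℕ => σ2 + (1 - 1 / ((j : ℝ) + 1)) * dist x Ξ ^ 2) atTop
      (𝓝 (σ2 + 1 * dist x Ξ ^ 2)) := by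
    refine tendsto_const_nhds.add (Tendsto.mul_const _ ?_)
    have h := tendsto_one_div_add_atTop_nhds_zero_nat (𝕜 := ℝ)
    simpa using tendsto_const_nhds.sub h
  have := le_of_tendsto hlim (Filter.Eventually.of_forall (fun j : ℕ => by
    have hj0 : (0:ℝ) < (j : ℝ) + 1 := by positivity
    refine key _ ?_ ?_
    · have : 1 / ((j:ℝ)+1) ≤ 1 := by
        rw [div_le_one hj0]; linarith [Nat.cast_nonneg (α := ℝ) j]
      linarith
    · have : 0 < 1 / ((j:ℝ)+1) := by positivity
      linarith))
  linarith [this]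

open MeasureTheory ProbabilityTheory in
private lemma sturm_exists_retract {H : Type*} [MetricSpace H] [MeasurableSpace H] [BorelSpace H]
    {N : ℕ} (hN : 0 < N) (a : Fin N → H) :
    ∃ c : H → Fin N, Measurable c ∧ ∀ n, a (c (a n)) = a n := by
  classical
  set p : ℕ → H → Prop := fun n x => (∃ h : n < N, a ⟨n, h⟩ = x) ∨ n = N with hp
  have hex : ∀ x : H, ∃ n, p n x := fun x => ⟨N, Or.inr rfl⟩
  have hpm : ∀ n, MeasurableSet { x | p n x } := by
    intro n
    by_cases hn : n < N
    · have : { x | p n x } = {a ⟨n, hn⟩} := by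
        ext x
        simp only [hp, Set.mem_setOf_eq, Set.mem_singleton_iff]
        constructor
        · rintro (⟨h, rfl⟩ | h)
          · rfl
          · omega
        · rintro rfl; exact Or.inl ⟨hn, rfl⟩
      rw [this]; exact MeasurableSet.singleton _
    · by_cases hn' : n = N
      · have : { x | p n x } = Set.univ := by
          ext x; simp [hp, hn']
        rw [this]; exact MeasurableSet.univ
      · have : { x | p n x } = ∅ := by
          ext x; simp only [hp, Set.mem_setOf_eq, Set.mem_empty_iff_false, iff_false]
          rintro (⟨h, _⟩ | h) <;> omega
        rw [this]; exact MeasurableSet.empty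
  have hd : Measurable fun x : H => Nat.find (hex x) := measurable_find hex hpm
  set g : ℕ → Fin N := fun m => if h : m < N then (⟨m, h⟩ : Fin N) else ⟨0, hN⟩ with hg
  refine ⟨fun x => g (Nat.find (hex x)), (measurable_of_countable g).comp hd, fun n => ?_⟩
  have hlt : Nat.find (hex (a n)) < N := by
    have hle : Nat.find (hex (a n)) ≤ (n : ℕ) :=
      Nat.find_le (Or.inl ⟨n.isLt, by simp⟩)
    exact lt_of_le_of_lt hle n.isLt
  have hspec := Nat.find_spec (hex (a n))
  rcases hspec with ⟨h, heq⟩ | h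
  · simp only [hg, dif_pos hlt]
    exact heq
  · omega

open MeasureTheory ProbabilityTheory in
private lemma sturm_integral_mixture {H : Type*} [MeasurableSpace H] [MeasurableSingletonClass H]
    {N : ℕ} (a : Fin N → H) (w : Fin N → ℝ) (hw : ∀ n, 0 ≤ w n) (f : H → ℝ) :
    ∫ y, f y ∂(∑ n, ENNReal.ofReal (w n) • Measure.dirac (a n)) = ∑ n, w n * f (a n) := by
  rw [integral_finset_sum_measure (fun n _ =>
    ((integrable_const (f (a n))).congr (ae_eq_dirac f).symm).smul_measure ENNReal.ofReal_ne_top)]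
  refine Finset.sum_congr rfl fun n _ => ?_
  rw [integral_smul_measure, integral_dirac, ENNReal.toReal_ofReal (hw n), smul_eq_mul]

open MeasureTheory ProbabilityTheory in
private lemma sturm_mixture_compl_range {H : Type*} [MeasurableSpace H]
    [MeasurableSingletonClass H] {N : ℕ} (a : Fin N → H) (w : Fin N → ℝ) :
    (∑ n, ENNReal.ofReal (w n) • Measure.dirac (a n)) (Set.range a)ᶜ = 0 := by
  rw [Measure.finset_sum_apply]
  refine Finset.sum_eq_zero fun n _ => ?_
  rw [Measure.smul_apply, Measure.dirac_apply' _ (Set.finite_range a).measurableSet.compl]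
  rw [Set.indicator_of_notMem (by simp)]
  simp

open MeasureTheory ProbabilityTheory in
private lemma sturm_integrable_of_bound {Ω : Type*} {m0 : MeasurableSpace Ω} {μ : Measure Ω}
    [IsFiniteMeasure μ] {f : Ω → ℝ} (hm : AEStronglyMeasurable f μ) (C : ℝ)
    (h : ∀ᵐ ω ∂μ, |f ω| ≤ C) : Integrable f μ :=
  Integrable.mono' (integrable_const C) hm (by simpa [Real.norm_eq_abs] using h)


/-- A function `f : H → (-∞,∞]` is (geodesically) convex if along every geodesic
`t ↦ (1-t)x ⊕ ty` it satisfies the convexity inequality. -/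
def GeoConvex {H : Type*} [MetricSpace H] (G : Hadamard H) (f : H → EReal) : Prop :=
  ∀ x y : H, ∀ t ∈ Set.Icc (0 : ℝ) 1,
    f (G.geo x y t) ≤ ((1 - t : ℝ) : EReal) * f x + ((t : ℝ) : EReal) * f y

open MeasureTheory ProbabilityTheory

set_option maxHeartbeats 1000000 in
/-- Law of large numbers in Hadamard spaces (Sturm): the inductive means `S_k`
converge almost surely to the Fréchet mean `Ξ`. -/
theorem lln_hadamard_sturm
    {H : Type*} [MetricSpace H] [CompleteSpace H]
    [MeasurableSpace H] [BorelSpace H]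
    (G : Hadamard H)
    {Ω : Type*} {m0 : MeasurableSpace Ω} {μ : Measure Ω} [IsProbabilityMeasure μ]
    (N : ℕ) (a : Fin N → H) (w : Fin N → ℝ)
    (hw : ∀ n, 0 < w n) (hsum : ∑ n, w n = 1)
    (Ξ : H)
    (hΞ : ∀ x : H, ∑ n, w n * dist Ξ (a n) ^ 2 ≤ ∑ n, w n * dist x (a n) ^ 2)
    (Y : ℕ → Ω → H) (hY_meas : ∀ k, Measurable (Y k))
    (hY_indep : iIndepFun Y μ)
    (hY_law : ∀ k : ℕ, 1 ≤ k →
      Measure.map (Y k) μ = ∑ n, ENNReal.ofReal (w n) • Measure.dirac (a n))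
    (S : ℕ → Ω → H)
    (hS1 : ∀ ω, S 1 ω = Y 1 ω)
    (hSrec : ∀ k : ℕ, 1 ≤ k → ∀ ω : Ω,
      S (k + 1) ω = G.geo (S k ω) (Y (k + 1) ω) (1 / ((k : ℝ) + 1))) :
    ∀ᵐ ω ∂μ, Tendsto (fun k => S k ω) atTop (𝓝 Ξ) := by
  classical
  -- dispose of the degenerate case N = 0
  rcases Nat.eq_zero_or_pos N with hN0 | hN
  · subst hN0; simpa using hsum
  have hw0 : ∀ n, 0 ≤ w n := fun n => (hw n).le
  obtain ⟨c, hc_meas, hc⟩ := sturm_exists_retract hN a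
  -- basic quantities
  set σ2 : ℝ := ∑ n, w n * dist (a n) Ξ ^ 2 with hσ2def
  have hσ2eq : σ2 = ∑ n, w n * dist Ξ (a n) ^ 2 := by
    simp [hσ2def, dist_comm]
  have hvar : ∀ x : H, σ2 + dist x Ξ ^ 2 ≤ ∑ n, w n * dist x (a n) ^ 2 := by
    intro x
    have := sturm_var_ineq G a w hw0 hsum Ξ hΞ x
    rw [← hσ2eq] at this
    exact this
  have hσ2nonneg : 0 ≤ σ2 := by
    exact Finset.sum_nonneg fun n _ => mul_nonneg (hw0 n) (sq_nonneg _)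
  set M : ℝ := ∑ n, dist (a n) Ξ ^ 2 with hMdef
  have hM0 : 0 ≤ M := by apply Finset.sum_nonneg; intro n _; positivity
  have hMn : ∀ n, dist (a n) Ξ ^ 2 ≤ M :=
    fun n => Finset.single_le_sum (f := fun n => dist (a n) Ξ ^ 2)
      (fun n _ => by positivity) (Finset.mem_univ n)
  set B : ℝ := Real.sqrt M with hBdef
  have hB0 : 0 ≤ B := Real.sqrt_nonneg M
  have hBsq : B ^ 2 = M := Real.sq_sqrt hM0
  have hBn : ∀ n, dist (a n) Ξ ≤ B :=
    fun n => (Real.le_sqrt dist_nonneg hM0).mpr (hMn n)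
  have sq_le : ∀ u v : ℝ, 0 ≤ u → 0 ≤ v → u ^ 2 ≤ v ^ 2 → u ≤ v := by
    intro u v hu hv h; nlinarith
  -- the index process and the measurable model of the recursive means
  set J : ℕ → Ω → Fin N := fun j ω => c (Y j ω) with hJdef
  have hJ : ∀ j, Measurable (J j) := fun j => hc_meas.comp (hY_meas j)
  set Φ : (k : ℕ) → (Fin (k + 1) → Fin N) → H :=
    fun k => Nat.rec (motive := fun k => (Fin (k + 1) → Fin N) → H)
      (fun v => a (v 0))
      (fun k ih v => G.geo (ih (fun i => v i.castSucc)) (a (v (Fin.last (k + 1))))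
        (1 / ((k : ℝ) + 2))) k with hΦdef
  have hΦ0 : ∀ v, Φ 0 v = a (v 0) := fun _ => rfl
  have hΦs : ∀ k v, Φ (k + 1) v
      = G.geo (Φ k (fun i => v i.castSucc)) (a (v (Fin.last (k + 1)))) (1 / ((k : ℝ) + 2)) :=
    fun _ _ => rfl
  have hΦmeas : ∀ k, Measurable (Φ k) := fun k => measurable_of_countable _
  set U : ℕ → Ω → H := fun k ω => Φ k (fun i : Fin (k + 1) => J ((i : ℕ) + 1) ω) with hUdef
  have hU_meas : ∀ k, Measurable (U k) := fun k =>
    (hΦmeas k).comp (measurable_pi_lambda _ fun i => hJ _)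
  -- time steps
  have ht01 : ∀ k : ℕ, (1 / ((k : ℝ) + 2)) ∈ Set.Icc (0 : ℝ) 1 := by
    intro k
    constructor
    · positivity
    · rw [div_le_one (by positivity)]
      have : (0:ℝ) ≤ (k : ℝ) := Nat.cast_nonneg k
      linarith
  have htpos : ∀ k : ℕ, (0:ℝ) < 1 / ((k : ℝ) + 2) := by
    intro k; positivity
  -- φ-side recursion
  have hUrec : ∀ (k : ℕ) (ω : Ω),
      U (k + 1) ω = G.geo (U k ω) (a (J (k + 2) ω)) (1 / ((k : ℝ) + 2)) := by
    intro k ω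
    rfl
  -- uniform bound
  have hΦB : ∀ k v, dist (Φ k v) Ξ ≤ B := by
    intro k
    induction k with
    | zero => intro v; rw [hΦ0]; exact hBn _
    | succ k ih =>
      intro v
      rw [hΦs]
      set t := 1 / ((k : ℝ) + 2)
      have hsq := G.cat0 Ξ (Φ k (fun i => v i.castSucc)) (a (v (Fin.last (k+1)))) t (ht01 k)
      refine sq_le _ _ dist_nonneg hB0 ?_
      have h1 : dist Ξ (Φ k (fun i => v i.castSucc)) ^ 2 ≤ B ^ 2 := by
        rw [dist_comm]
        exact pow_le_pow_left₀ dist_nonneg (ih _) 2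
      have h2 : dist Ξ (a (v (Fin.last (k+1)))) ^ 2 ≤ B ^ 2 := by
        rw [dist_comm]
        exact pow_le_pow_left₀ dist_nonneg (hBn _) 2
      have ht := ht01 k
      rw [dist_comm]
      nlinarith [hsq, (ht01 k).1, (ht01 k).2, htpos k,
        sq_nonneg (dist (Φ k (fun i => v i.castSucc)) (a (v (Fin.last (k+1))))),
        mul_nonneg (mul_nonneg (htpos k).le (sub_nonneg.mpr (ht01 k).2))
          (sq_nonneg (dist (Φ k (fun i => v i.castSucc)) (a (v (Fin.last (k+1))))))]
  have hUB : ∀ k ω, dist (U k ω) Ξ ≤ B := fun k ω => hΦB k _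
  -- squared distances to the mean
  set ζ : ℕ → Ω → ℝ := fun k ω => dist (U k ω) Ξ ^ 2 with hζdef
  have hζ_nonneg : ∀ k ω, 0 ≤ ζ k ω := fun k ω => sq_nonneg _
  have hζM : ∀ k ω, ζ k ω ≤ M := by
    intro k ω
    rw [← hBsq]
    exact pow_le_pow_left₀ dist_nonneg (hUB k ω) 2
  have hζrec : ∀ (k : ℕ) (ω : Ω),
      ζ (k + 1) ω ≤ (1 - 1 / ((k : ℝ) + 2)) * ζ k ω
        + (1 / ((k : ℝ) + 2)) * dist (a (J (k + 2) ω)) Ξ ^ 2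
        - (1 / ((k : ℝ) + 2)) * (1 - 1 / ((k : ℝ) + 2)) * dist (U k ω) (a (J (k + 2) ω)) ^ 2 := by
    intro k ω
    have h := G.cat0 Ξ (U k ω) (a (J (k + 2) ω)) _ (ht01 k)
    rw [← hUrec k ω] at h
    calc ζ (k+1) ω = dist Ξ (U (k+1) ω) ^ 2 := by rw [hζdef]; rw [dist_comm]
      _ ≤ _ := by
          refine le_trans h (le_of_eq ?_)
          rw [dist_comm Ξ (U k ω), dist_comm Ξ (a (J (k + 2) ω))]
  -- one-step displacement bound
  have hstep : ∀ (k : ℕ) (ω : Ω), dist (U (k + 1) ω) (U k ω) ≤ 2 * B / ((k : ℝ) + 2) := by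
    intro k ω
    have hgd := G.geo_dist (U k ω) (a (J (k + 2) ω)) _ (ht01 k) 0 ⟨le_refl 0, zero_le_one⟩
    rw [G.geo_zero] at hgd
    have habs : |1 / ((k : ℝ) + 2) - 0| = 1 / ((k : ℝ) + 2) := by
      rw [sub_zero, abs_of_nonneg (htpos k).le]
    rw [hUrec k ω, hgd, habs]
    have hd : dist (U k ω) (a (J (k + 2) ω)) ≤ 2 * B := by
      calc dist (U k ω) (a (J (k + 2) ω)) ≤ dist (U k ω) Ξ + dist Ξ (a (J (k + 2) ω)) :=
            dist_triangle _ _ _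
        _ ≤ B + B := add_le_add (hUB k ω) (by rw [dist_comm]; exact hBn _)
        _ = 2 * B := by ring
    calc 1 / ((k : ℝ) + 2) * dist (U k ω) (a (J (k + 2) ω))
        ≤ 1 / ((k : ℝ) + 2) * (2 * B) := by
          exact mul_le_mul_of_nonneg_left hd (htpos k).le
      _ = 2 * B / ((k : ℝ) + 2) := by ring
  -- almost sure identification of the samples
  have haJ : ∀ᵐ ω ∂μ, ∀ j, 1 ≤ j → a (J j ω) = Y j ω := by
    rw [ae_all_iff]
    intro j
    by_cases hj : 1 ≤ j
    · have hrm : MeasurableSet (Set.range a) := (Set.finite_range a).measurableSet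
      have hz : μ ((Y j) ⁻¹' (Set.range a)ᶜ) = 0 := by
        rw [← Measure.map_apply (hY_meas j) hrm.compl, hY_law j hj]
        exact sturm_mixture_compl_range a w
      have hmem : ∀ᵐ ω ∂μ, Y j ω ∈ Set.range a := by
        rw [ae_iff]
        exact hz
      filter_upwards [hmem] with ω hω
      intro _
      obtain ⟨n, hn⟩ := hω
      have hJw : J j ω = c (a n) := by
        show c (Y j ω) = c (a n)
        rw [hn]
      rw [hJw, hc n, hn]
    · filter_upwards with ω h
      omega
  -- almost sure identification of the recursive means
  have hUS : ∀ᵐ ω ∂μ, ∀ k : ℕ, S (k + 1) ω = U k ω := by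
    filter_upwards [haJ] with ω hω
    intro k
    induction k with
    | zero =>
      have h1 : U 0 ω = a (J 1 ω) := rfl
      rw [hS1 ω, h1, hω 1 le_rfl]
    | succ k ih =>
      have h2 := hSrec (k + 1) (Nat.le_add_left 1 k) ω
      have hY' : Y (k + 1 + 1) ω = a (J (k + 1 + 1) ω) := (hω (k + 1 + 1) (by omega)).symm
      have harg : (1 : ℝ) / ((((k : ℕ) + 1 : ℕ) : ℝ) + 1) = 1 / ((k : ℝ) + 2) := by
        push_cast; ring_nf
      rw [h2, ih, hY', harg, hUrec k ω]
  -- measurability and integrability of the squared distances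
  have hdXi : Measurable fun x : H => dist x Ξ := (continuous_id.dist continuous_const).measurable
  have hζmeas : ∀ k, Measurable (ζ k) := fun k =>
    ((hdXi.comp (hU_meas k)).pow_const 2)
  have hζint : ∀ k, Integrable (ζ k) μ := by
    intro k
    refine sturm_integrable_of_bound (hζmeas k).aestronglyMeasurable M ?_
    filter_upwards with ω
    rw [abs_of_nonneg (hζ_nonneg k ω)]
    exact hζM k ω
  -- first moments of the samples
  have hI1 : ∀ j, 1 ≤ j → ∫ ω, dist (Y j ω) Ξ ^ 2 ∂μ = σ2 := by
    intro j hj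
    have hfm : Measurable fun y : H => dist y Ξ ^ 2 := hdXi.pow_const 2
    rw [← integral_map (hY_meas j).aemeasurable hfm.aestronglyMeasurable, hY_law j hj,
      sturm_integral_mixture a w hw0]
  have hI2 : ∀ k : ℕ, ∫ ω, dist (a (J (k + 2) ω)) Ξ ^ 2 ∂μ = σ2 := by
    intro k
    have hae : (fun ω => dist (a (J (k + 2) ω)) Ξ ^ 2) =ᵐ[μ] fun ω => dist (Y (k + 2) ω) Ξ ^ 2 := by
      filter_upwards [haJ] with ω hω
      rw [hω (k + 2) (by omega)]
    rw [integral_congr_ae hae]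
    exact hI1 (k + 2) (by omega)
  have hint_aJ : ∀ k : ℕ, Integrable (fun ω => dist (a (J (k + 2) ω)) Ξ ^ 2) μ := by
    intro k
    have hm : Measurable fun ω => dist (a (J (k + 2) ω)) Ξ ^ 2 :=
      (measurable_of_countable (fun n : Fin N => dist (a n) Ξ ^ 2)).comp (hJ (k + 2))
    refine sturm_integrable_of_bound hm.aestronglyMeasurable M ?_
    filter_upwards with ω
    rw [abs_of_nonneg (sq_nonneg _)]
    exact hMn _
  have hdcross : ∀ (k : ℕ) (ω : Ω), dist (U k ω) (a (J (k + 2) ω)) ≤ 2 * B := by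
    intro k ω
    calc dist (U k ω) (a (J (k + 2) ω)) ≤ dist (U k ω) Ξ + dist Ξ (a (J (k + 2) ω)) :=
          dist_triangle _ _ _
      _ ≤ B + B := add_le_add (hUB k ω) (by rw [dist_comm]; exact hBn _)
      _ = 2 * B := by ring
  have hint_cross : ∀ k : ℕ, Integrable (fun ω => dist (U k ω) (a (J (k + 2) ω)) ^ 2) μ := by
    intro k
    have hg : Measurable fun p : (Fin (k + 1) → Fin N) × Fin N => dist (Φ k p.1) (a p.2) ^ 2 :=
      measurable_of_countable _
    have hm : Measurable fun ω => dist (U k ω) (a (J (k + 2) ω)) ^ 2 :=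
      hg.comp ((measurable_pi_lambda _ fun i => hJ _).prodMk (hJ (k + 2)))
    refine sturm_integrable_of_bound hm.aestronglyMeasurable ((2 * B) ^ 2) ?_
    filter_upwards with ω
    rw [abs_of_nonneg (sq_nonneg _)]
    exact pow_le_pow_left₀ dist_nonneg (hdcross k ω) 2
  have hint_sum : ∀ k : ℕ, Integrable (fun ω => ∑ n, w n * dist (U k ω) (a n) ^ 2) μ := by
    intro k
    refine integrable_finset_sum _ fun n _ => Integrable.const_mul ?_ (w n)
    have hm : Measurable fun ω => dist (U k ω) (a n) ^ 2 :=
      ((continuous_id.dist continuous_const).measurable.comp (hU_meas k)).pow_const 2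
    refine sturm_integrable_of_bound hm.aestronglyMeasurable ((2 * B) ^ 2) ?_
    filter_upwards with ω
    rw [abs_of_nonneg (sq_nonneg _)]
    have hd : dist (U k ω) (a n) ≤ 2 * B := by
      calc dist (U k ω) (a n) ≤ dist (U k ω) Ξ + dist Ξ (a n) := dist_triangle _ _ _
        _ ≤ B + B := add_le_add (hUB k ω) (by rw [dist_comm]; exact hBn _)
        _ = 2 * B := by ring
    exact pow_le_pow_left₀ dist_nonneg hd 2
  -- the key independence computation
  have hkey : ∀ k : ℕ, ∫ ω, dist (U k ω) (Y (k + 2) ω) ^ 2 ∂μ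
      = ∫ ω, ∑ n, w n * dist (U k ω) (a n) ^ 2 ∂μ := by
    intro k
    set V : Ω → (Fin (k + 1) → Fin N) := fun ω i => J ((i : ℕ) + 1) ω with hVdef
    have hV_meas : Measurable V := measurable_pi_lambda _ fun i => hJ _
    set Sf : Finset ℕ := Finset.image (fun i : Fin (k + 1) => (i : ℕ) + 1) Finset.univ with hSfdef
    have hdisj : Disjoint Sf ({k + 2} : Finset ℕ) := by
      rw [Finset.disjoint_singleton_right]
      simp only [hSfdef, Finset.mem_image]
      rintro ⟨i, -, hi⟩
      have := i.isLt
      omega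
    have hbase := hY_indep.indepFun_finset Sf {k + 2} hdisj hY_meas
    have hmem : ∀ i : Fin (k + 1), ((i : ℕ) + 1) ∈ Sf := by
      intro i
      simp [hSfdef]
    have hmem2 : (k + 2) ∈ ({k + 2} : Finset ℕ) := Finset.mem_singleton_self _
    have hφLm : Measurable fun (g : { x // x ∈ Sf } → H) (i : Fin (k + 1)) =>
        c (g ⟨(i : ℕ) + 1, hmem i⟩) :=
      measurable_pi_lambda _ fun i => hc_meas.comp (measurable_pi_apply _)
    have hψRm : Measurable fun g : { x // x ∈ ({k + 2} : Finset ℕ) } → H => g ⟨k + 2, hmem2⟩ :=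
      measurable_pi_apply _
    have hIndep : IndepFun V (Y (k + 2)) μ := hbase.comp hφLm hψRm
    set ν : Measure H := μ.map (Y (k + 2)) with hνdef
    have hνlaw : ν = ∑ n, ENNReal.ofReal (w n) • Measure.dirac (a n) := hY_law (k + 2) (by omega)
    haveI : IsProbabilityMeasure ν := Measure.isProbabilityMeasure_map (hY_meas (k + 2)).aemeasurable
    set κ : Measure (Fin (k + 1) → Fin N) := μ.map V with hκdef
    haveI : IsProbabilityMeasure κ := Measure.isProbabilityMeasure_map hV_meas.aemeasurable
    have hmap : μ.map (fun ω => (V ω, Y (k + 2) ω)) = κ.prod ν :=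
      (indepFun_iff_map_prod_eq_prod_map_map hV_meas.aemeasurable
        (hY_meas (k + 2)).aemeasurable).mp hIndep
    set F : (Fin (k + 1) → Fin N) × H → ℝ := fun p => dist (Φ k p.1) p.2 ^ 2 with hFdef
    have hFmeas : Measurable F := by
      have h1 : Measurable fun p : H × (Fin (k + 1) → Fin N) => dist (Φ k p.2) p.1 ^ 2 := by
        apply measurable_from_prod_countable_left
        intro v
        show Measurable fun x : H => dist (Φ k v) x ^ 2
        exact (continuous_const.dist continuous_id).measurable.pow_const 2
      exact h1.comp measurable_swap
    have hprod_ae : ∀ᵐ p ∂(κ.prod ν), p.2 ∈ Set.range a := by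
      rw [ae_iff]
      have hset : {p : (Fin (k + 1) → Fin N) × H | ¬ p.2 ∈ Set.range a}
          = Set.univ ×ˢ (Set.range a)ᶜ := by
        ext p
        simp
      rw [hset, Measure.prod_prod, measure_univ, one_mul, hνlaw]
      exact sturm_mixture_compl_range a w
    have hFint : Integrable F (κ.prod ν) := by
      refine sturm_integrable_of_bound hFmeas.aestronglyMeasurable ((2 * B) ^ 2) ?_
      filter_upwards [hprod_ae] with p hp
      obtain ⟨n, hn⟩ := hp
      have h1 : dist (Φ k p.1) p.2 ≤ 2 * B := by
        calc dist (Φ k p.1) p.2 ≤ dist (Φ k p.1) Ξ + dist Ξ p.2 := dist_triangle _ _ _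
          _ ≤ B + B := add_le_add (hΦB k _) (by rw [← hn, dist_comm]; exact hBn n)
          _ = 2 * B := by ring
      rw [abs_of_nonneg (sq_nonneg _)]
      exact pow_le_pow_left₀ dist_nonneg h1 2
    have hpair_meas : Measurable fun ω => (V ω, Y (k + 2) ω) := hV_meas.prodMk (hY_meas _)
    calc ∫ ω, dist (U k ω) (Y (k + 2) ω) ^ 2 ∂μ
        = ∫ ω, F (V ω, Y (k + 2) ω) ∂μ := rfl
      _ = ∫ p, F p ∂(μ.map fun ω => (V ω, Y (k + 2) ω)) :=
          (integral_map hpair_meas.aemeasurable hFmeas.aestronglyMeasurable).symm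
      _ = ∫ p, F p ∂(κ.prod ν) := by rw [hmap]
      _ = ∫ v, ∫ y, F (v, y) ∂ν ∂κ := integral_prod F hFint
      _ = ∫ v, ∑ n, w n * dist (Φ k v) (a n) ^ 2 ∂κ := by
          refine integral_congr_ae (Filter.Eventually.of_forall fun v => ?_)
          rw [hνlaw]
          exact sturm_integral_mixture a w hw0 _
      _ = ∫ ω, ∑ n, w n * dist (Φ k (V ω)) (a n) ^ 2 ∂μ := by
          rw [hκdef]
          exact integral_map hV_meas.aemeasurable (measurable_of_countable _).aestronglyMeasurable
      _ = ∫ ω, ∑ n, w n * dist (U k ω) (a n) ^ 2 ∂μ := rfl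
  -- the expectations of the squared distances
  set bb : ℕ → ℝ := fun k => ∫ ω, ζ k ω ∂μ with hbbdef
  have hb0 : bb 0 = σ2 := by
    have hae : (fun ω => ζ 0 ω) =ᵐ[μ] fun ω => dist (Y 1 ω) Ξ ^ 2 := by
      filter_upwards [haJ] with ω hω
      show dist (U 0 ω) Ξ ^ 2 = _
      have h1 : U 0 ω = a (J 1 ω) := rfl
      rw [h1, hω 1 le_rfl]
    rw [hbbdef]
    simp only
    rw [integral_congr_ae hae]
    exact hI1 1 le_rfl
  have hbrec : ∀ k : ℕ, bb (k + 1)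
      ≤ (1 - 1 / ((k : ℝ) + 2)) ^ 2 * bb k + (1 / ((k : ℝ) + 2)) ^ 2 * σ2 := by
    intro k
    set t : ℝ := 1 / ((k : ℝ) + 2) with htdef
    have ht0 : 0 < t := htpos k
    have ht1 : t ≤ 1 := (ht01 k).2
    have hIcross_eq : ∫ ω, dist (U k ω) (a (J (k + 2) ω)) ^ 2 ∂μ
        = ∫ ω, ∑ n, w n * dist (U k ω) (a n) ^ 2 ∂μ := by
      have hae : (fun ω => dist (U k ω) (a (J (k + 2) ω)) ^ 2)
          =ᵐ[μ] fun ω => dist (U k ω) (Y (k + 2) ω) ^ 2 := by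
        filter_upwards [haJ] with ω hω
        rw [hω (k + 2) (by omega)]
      rw [integral_congr_ae hae, hkey k]
    have hIcross_ge : σ2 + bb k ≤ ∫ ω, dist (U k ω) (a (J (k + 2) ω)) ^ 2 ∂μ := by
      rw [hIcross_eq]
      have heq : ∫ ω, (σ2 + ζ k ω) ∂μ = σ2 + bb k := by
        rw [integral_add (integrable_const σ2) (hζint k), integral_const, probReal_univ]
        simp [hbbdef]
      rw [← heq]
      exact integral_mono ((integrable_const σ2).add (hζint k)) (hint_sum k)
        (fun ω => hvar (U k ω))
    have hmain : bb (k + 1) ≤ (1 - t) * bb k + t * σ2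
        - t * (1 - t) * ∫ ω, dist (U k ω) (a (J (k + 2) ω)) ^ 2 ∂μ := by
      have hintA : Integrable (fun ω => (1 - t) * ζ k ω + t * dist (a (J (k + 2) ω)) Ξ ^ 2) μ :=
        ((hζint k).const_mul (1 - t)).add ((hint_aJ k).const_mul t)
      have hintB : Integrable (fun ω => t * (1 - t) * dist (U k ω) (a (J (k + 2) ω)) ^ 2) μ :=
        (hint_cross k).const_mul (t * (1 - t))
      have hle := integral_mono (hζint (k + 1)) (hintA.sub hintB) (fun ω => hζrec k ω)
      simp only [Pi.sub_apply, integral_sub hintA hintB,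
        integral_add ((hζint k).const_mul (1 - t)) ((hint_aJ k).const_mul t),
        integral_const_mul] at hle
      rw [hI2 k] at hle
      exact hle
    have htt : 0 ≤ t * (1 - t) := mul_nonneg ht0.le (by linarith)
    nlinarith [mul_le_mul_of_nonneg_left hIcross_ge htt]
  have hbk : ∀ k : ℕ, bb k ≤ σ2 / ((k : ℝ) + 1) := by
    intro k
    induction k with
    | zero =>
      rw [hb0]
      norm_num
    | succ k ih =>
      have h1 := hbrec k
      have hk0 : (0:ℝ) < (k : ℝ) + 1 := by positivity
      have hk2 : (0:ℝ) < (k : ℝ) + 2 := by positivity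
      have h2 : (1 - 1 / ((k : ℝ) + 2)) ^ 2 * bb k
          ≤ (1 - 1 / ((k : ℝ) + 2)) ^ 2 * (σ2 / ((k : ℝ) + 1)) := by
        apply mul_le_mul_of_nonneg_left ih (sq_nonneg _)
      have h3 : (1 - 1 / ((k : ℝ) + 2)) ^ 2 * (σ2 / ((k : ℝ) + 1))
          + (1 / ((k : ℝ) + 2)) ^ 2 * σ2 = σ2 / ((k : ℝ) + 2) := by
        field_simp
        ring
      have hcast : ((k + 1 : ℕ) : ℝ) + 1 = (k : ℝ) + 2 := by push_cast; ring
      rw [hcast]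
      linarith
  -- the subsequence along squares
  set q : ℕ → ℕ := fun m => (m + 1) * (m + 1) - 1 with hqdef
  have hq1 : ∀ m, q m + 1 = (m + 1) * (m + 1) := by
    intro m
    have h1 : 1 ≤ (m + 1) * (m + 1) := Nat.one_le_iff_ne_zero.mpr
      (Nat.mul_ne_zero (Nat.succ_ne_zero m) (Nat.succ_ne_zero m))
    show (m + 1) * (m + 1) - 1 + 1 = (m + 1) * (m + 1)
    omega
  have hqcast : ∀ m : ℕ, ((q m : ℝ) + 1) = ((m : ℝ) + 1) ^ 2 := by
    intro m
    have h1 : ((q m + 1 : ℕ) : ℝ) = (((m + 1) * (m + 1) : ℕ) : ℝ) := by rw [hq1 m]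
    push_cast at h1
    rw [sq]
    linarith
  have hbq : ∀ m : ℕ, bb (q m) ≤ σ2 / (((m : ℝ) + 1) ^ 2) := by
    intro m
    have := hbk (q m)
    rwa [hqcast m] at this
  -- almost sure convergence along the subsequence
  have hζqmeas : ∀ m : ℕ, Measurable fun ω => ENNReal.ofReal (ζ (q m) ω) :=
    fun m => (hζmeas (q m)).ennreal_ofReal
  have hlinint : ∀ j : ℕ, ∫⁻ ω, ENNReal.ofReal (ζ j ω) ∂μ = ENNReal.ofReal (bb j) := fun j =>
    (ofReal_integral_eq_lintegral_ofReal (hζint j)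
      (Filter.Eventually.of_forall (hζ_nonneg j))).symm
  have hsummable : Summable (fun m : ℕ => σ2 / ((m : ℝ) + 1) ^ 2) := by
    have h0 : Summable (fun n : ℕ => 1 / (n : ℝ) ^ 2) :=
      Real.summable_one_div_nat_pow.mpr one_lt_two
    have h1 : Summable (fun m : ℕ => 1 / ((m : ℝ) + 1) ^ 2) := by
      have h2 := (summable_nat_add_iff 1).mpr h0
      refine h2.congr fun m => ?_
      push_cast
      ring
    refine (h1.mul_left σ2).congr fun m => ?_
    rw [mul_one_div]
  have hsumfin : ∫⁻ ω, ∑' m, ENNReal.ofReal (ζ (q m) ω) ∂μ ≠ ⊤ := by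
    rw [lintegral_tsum (fun m => (hζqmeas m).aemeasurable)]
    have hle : ∑' m, ∫⁻ ω, ENNReal.ofReal (ζ (q m) ω) ∂μ
        ≤ ∑' m : ℕ, ENNReal.ofReal (σ2 / ((m : ℝ) + 1) ^ 2) := by
      refine ENNReal.tsum_le_tsum fun m => ?_
      rw [hlinint]
      exact ENNReal.ofReal_le_ofReal (hbq m)
    refine ne_top_of_le_ne_top ?_ hle
    rw [← ENNReal.ofReal_tsum_of_nonneg
      (fun m => div_nonneg hσ2nonneg (by positivity)) hsummable]
    exact ENNReal.ofReal_ne_top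
  have haesub : ∀ᵐ ω ∂μ, Tendsto (fun m => ζ (q m) ω) atTop (𝓝 0) := by
    have hfin := ae_lt_top (Measurable.ennreal_tsum fun m => hζqmeas m) hsumfin
    filter_upwards [hfin] with ω hω
    have h0 : Tendsto (fun m => ENNReal.ofReal (ζ (q m) ω)) atTop (𝓝 0) :=
      ENNReal.tendsto_atTop_zero_of_tsum_ne_top hω.ne
    have h2 : Tendsto (fun m => (ENNReal.ofReal (ζ (q m) ω)).toReal) atTop
        (𝓝 (0 : ENNReal).toReal) := (ENNReal.tendsto_toReal (by simp)).comp h0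
    simp only [ENNReal.toReal_zero] at h2
    refine h2.congr fun m => ?_
    exact ENNReal.toReal_ofReal (hζ_nonneg _ _)
  -- telescoping bound
  have htel : ∀ (ω : Ω) (l k : ℕ), l ≤ k →
      dist (U k ω) (U l ω) ≤ ((k : ℝ) - l) * (2 * B / ((l : ℝ) + 2)) := by
    intro ω l k hlk
    induction k, hlk using Nat.le_induction with
    | base => simp
    | succ k hlk ih =>
      have h1 := hstep k ω
      have h2 : 2 * B / ((k : ℝ) + 2) ≤ 2 * B / ((l : ℝ) + 2) := by
        rw [div_eq_mul_one_div (2 * B), div_eq_mul_one_div (2 * B)]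
        refine mul_le_mul_of_nonneg_left
          (one_div_le_one_div_of_le (by positivity) ?_) (by linarith)
        have := (Nat.cast_le (α := ℝ)).mpr hlk
        linarith
      calc dist (U (k + 1) ω) (U l ω)
          ≤ dist (U (k + 1) ω) (U k ω) + dist (U k ω) (U l ω) := dist_triangle _ _ _
        _ ≤ 2 * B / ((l : ℝ) + 2) + ((k : ℝ) - l) * (2 * B / ((l : ℝ) + 2)) :=
            add_le_add (h1.trans h2) ih
        _ = (((k + 1 : ℕ) : ℝ) - l) * (2 * B / ((l : ℝ) + 2)) := by push_cast; ring
  -- chaining within blocks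
  have hchain : ∀ (ω : Ω) (m k : ℕ), q m ≤ k → k ≤ q (m + 1) →
      dist (U k ω) Ξ ≤ dist (U (q m) ω) Ξ + 6 * B / ((m : ℝ) + 1) := by
    intro ω m k h1 h2
    have htel' := htel ω (q m) k h1
    have hB2 : (0:ℝ) ≤ 2 * B := by linarith
    have hstep2 : ((k : ℝ) - q m) * (2 * B / ((q m : ℝ) + 2)) ≤ 6 * B / ((m : ℝ) + 1) := by
      have hkb : (k : ℝ) - q m ≤ 2 * (m : ℝ) + 3 := by
        have e3 : (m + 1 + 1) * (m + 1 + 1) = (m + 1) * (m + 1) + (2 * m + 3) := by ring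
        have e1 := hq1 m
        have e2 := hq1 (m + 1)
        have hkle : k ≤ q m + (2 * m + 3) := by omega
        have := (Nat.cast_le (α := ℝ)).mpr hkle
        push_cast at this
        linarith
      have hknn : (0:ℝ) ≤ (k : ℝ) - q m := by
        have := (Nat.cast_le (α := ℝ)).mpr h1
        linarith
      have hqm2 : ((m : ℝ) + 1) ^ 2 ≤ (q m : ℝ) + 2 := by
        have := hqcast m
        linarith
      set x : ℝ := (m : ℝ) + 1 with hxdef
      have hx1 : (1:ℝ) ≤ x := by
        have : (0:ℝ) ≤ (m : ℝ) := Nat.cast_nonneg m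
        simp only [hxdef]
        linarith
      have hx0 : (0:ℝ) < x := by linarith
      have hd1 : 2 * B / ((q m : ℝ) + 2) ≤ 2 * B / x ^ 2 := by
        rw [div_eq_mul_one_div (2 * B), div_eq_mul_one_div (2 * B)]
        exact mul_le_mul_of_nonneg_left
          (one_div_le_one_div_of_le (by positivity) hqm2) hB2
      have hd2 : 2 * (m : ℝ) + 3 ≤ 3 * x := by
        simp only [hxdef]
        linarith
      calc ((k : ℝ) - q m) * (2 * B / ((q m : ℝ) + 2))
          ≤ (2 * (m : ℝ) + 3) * (2 * B / ((q m : ℝ) + 2)) := by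
            refine mul_le_mul_of_nonneg_right hkb (div_nonneg hB2 (by positivity))
        _ ≤ (2 * (m : ℝ) + 3) * (2 * B / x ^ 2) := by
            refine mul_le_mul_of_nonneg_left hd1 (by positivity)
        _ ≤ 3 * x * (2 * B / x ^ 2) := by
            refine mul_le_mul_of_nonneg_right hd2 (div_nonneg hB2 (by positivity))
        _ = 6 * B / x := by
            field_simp
            ring
    have htri := dist_triangle (U k ω) (U (q m) ω) Ξ
    linarith
  -- the square-root index function
  have hrg : ∀ k : ℕ, q (Nat.sqrt (k + 1) - 1) ≤ k ∧ k ≤ q (Nat.sqrt (k + 1) - 1 + 1) := by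
    intro k
    have h1 : 1 ≤ Nat.sqrt (k + 1) := Nat.sqrt_pos.mpr (Nat.succ_pos k)
    have hs : Nat.sqrt (k + 1) - 1 + 1 = Nat.sqrt (k + 1) := by omega
    have h2 : Nat.sqrt (k + 1) * Nat.sqrt (k + 1) ≤ k + 1 := Nat.sqrt_le (k + 1)
    have h3 : k + 1 < (Nat.sqrt (k + 1) + 1) * (Nat.sqrt (k + 1) + 1) := Nat.lt_succ_sqrt (k + 1)
    constructor
    · show (Nat.sqrt (k + 1) - 1 + 1) * (Nat.sqrt (k + 1) - 1 + 1) - 1 ≤ k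
      rw [hs]
      omega
    · show k ≤ (Nat.sqrt (k + 1) - 1 + 1 + 1) * (Nat.sqrt (k + 1) - 1 + 1 + 1) - 1
      rw [hs]
      omega
  have hrtends : Tendsto (fun k : ℕ => Nat.sqrt (k + 1) - 1) atTop atTop := by
    refine tendsto_atTop_atTop.mpr fun b => ⟨(b + 2) * (b + 2), fun k hk => ?_⟩
    have hb2 : b + 2 ≤ Nat.sqrt (k + 1) := Nat.le_sqrt.mpr (by omega)
    omega
  -- conclusion
  filter_upwards [hUS, haesub] with ω hωS hωsub
  have hsubdist : Tendsto (fun m => dist (U (q m) ω) Ξ) atTop (𝓝 0) := by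
    have hcont : Tendsto Real.sqrt (𝓝 0) (𝓝 0) := by
      simpa using Real.continuous_sqrt.tendsto 0
    have hcomp := hcont.comp hωsub
    refine hcomp.congr fun m => ?_
    exact Real.sqrt_sq dist_nonneg
  have hdiv0 : Tendsto (fun m : ℕ => 6 * B / ((m : ℝ) + 1)) atTop (𝓝 0) := by
    have h := tendsto_one_div_add_atTop_nhds_zero_nat (𝕜 := ℝ)
    have h2 := h.const_mul (6 * B)
    simpa [mul_one_div, div_eq_mul_inv] using h2
  have hbig : Tendsto (fun m => dist (U (q m) ω) Ξ + 6 * B / ((m : ℝ) + 1)) atTop (𝓝 0) := by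
    have := hsubdist.add hdiv0
    simpa using this
  have hcomp2 : Tendsto (fun k : ℕ =>
      dist (U (q (Nat.sqrt (k + 1) - 1)) ω) Ξ
        + 6 * B / (((Nat.sqrt (k + 1) - 1 : ℕ) : ℝ) + 1)) atTop (𝓝 0) :=
    hbig.comp hrtends
  have hfinal : Tendsto (fun k => dist (U k ω) Ξ) atTop (𝓝 0) := by
    refine squeeze_zero (fun k => dist_nonneg) (fun k => ?_) hcomp2
    exact hchain ω _ k (hrg k).1 (hrg k).2
  have hUtends : Tendsto (fun k => U k ω) atTop (𝓝 Ξ) :=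
    tendsto_iff_dist_tendsto_zero.mpr hfinal
  have hStends : Tendsto (fun k => S (k + 1) ω) atTop (𝓝 Ξ) :=
    hUtends.congr fun k => (hωS k).symm
  exact (tendsto_add_atTop_iff_nat 1).mp hStends
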